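/- Let f be the probability mass function of a sum of m independent Bernoulli random variables with parameters p_1,...,p_m (so f_k = P(B_1+...+B_m = k), with f_k = 0 for k < 0 or k > m). Then for every integer k and every integer q ≥ 1: q·f_k·f_{k-q} = Σ_{j=1}^m p_j(1-p_j)·[f^{(j)}_{k-1}·f^{(j)}_{k-q} − f^{(j)}_k·f^{(j)}_{k-q-1}], where f^{(j)} is the mass function of the sum leaving out the j-th Bernoulli variable. -/

import Mathlib

open Finset

/-- Probability mass function of a sum of independent Bernoulli random variables
indexed by the finite set `I`, with parameters `p i`. -/
def bernoulliSumPMF (I : Finset ℕ) (p : ℕ → ℝ) (k : ℤ) : ℝ :=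
  if 0 ≤ k then
    ∑ S ∈ I.powersetCard k.toNat, (∏ i ∈ S, p i) * (∏ i ∈ I \ S, (1 - p i))
  else 0

lemma bernoulliSumPMF_rec (I : Finset ℕ) (p : ℕ → ℝ) {j : ℕ} (hj : j ∈ I) (k : ℤ) :
    bernoulliSumPMF I p k =
      p j * bernoulliSumPMF (I.erase j) p (k - 1)
      + (1 - p j) * bernoulliSumPMF (I.erase j) p k := by
  unfold bernoulliSumPMF
  rcases lt_trichotomy k 0 with hk | hk | hk
  · rw [if_neg (by omega), if_neg (by omega), if_neg (by omega)]; ring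
  · subst hk
    rw [if_pos le_rfl, if_pos le_rfl, if_neg (by omega)]
    have h1 : ∏ i ∈ I, (1 - p i) = (1 - p j) * ∏ i ∈ I.erase j, (1 - p i) :=
      (Finset.mul_prod_erase I _ hj).symm
    simp [Finset.powersetCard_zero, h1]
  · rw [if_pos (by omega), if_pos (by omega), if_pos (by omega)]
    have hje : j ∉ I.erase j := Finset.notMem_erase j I
    have hins : I = insert j (I.erase j) := (Finset.insert_erase hj).symm
    have hn : k.toNat = (k - 1).toNat + 1 := by omega
    rw [hn]
    have hps : I.powersetCard ((k - 1).toNat + 1)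
        = (I.erase j).powersetCard ((k - 1).toNat + 1)
          ∪ ((I.erase j).powersetCard ((k - 1).toNat)).image (insert j) := by
      nth_rewrite 1 [hins]
      rw [Finset.powersetCard_succ_insert hje]
    have hdisj : Disjoint ((I.erase j).powersetCard ((k - 1).toNat + 1))
        (((I.erase j).powersetCard ((k - 1).toNat)).image (insert j)) := by
      rw [Finset.disjoint_left]
      intro S hS hS'
      rcases Finset.mem_image.1 hS' with ⟨T, hT, rfl⟩
      have := (Finset.mem_powersetCard.1 hS).1 (Finset.mem_insert_self j T)
      exact hje this
    rw [hps, Finset.sum_union hdisj]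
    have himg : ∑ S ∈ ((I.erase j).powersetCard ((k - 1).toNat)).image (insert j),
          (∏ i ∈ S, p i) * (∏ i ∈ I \ S, (1 - p i))
        = p j * ∑ S ∈ (I.erase j).powersetCard ((k - 1).toNat),
            (∏ i ∈ S, p i) * (∏ i ∈ I.erase j \ S, (1 - p i)) := by
      rw [Finset.sum_image, Finset.mul_sum]
      · apply Finset.sum_congr rfl
        intro S hS
        have hjS : j ∉ S := fun h => hje ((Finset.mem_powersetCard.1 hS).1 h)
        have hsd : I \ insert j S = I.erase j \ S := by
          ext i; simp [Finset.mem_erase, Finset.mem_insert]; tauto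
        rw [Finset.prod_insert hjS, hsd]; ring
      · intro S hS T hT hST
        have hjS : j ∉ S := fun h => hje ((Finset.mem_powersetCard.1 hS).1 h)
        have hjT : j ∉ T := fun h => hje ((Finset.mem_powersetCard.1 hT).1 h)
        have := congrArg (fun U => Finset.erase U j) hST
        simpa [Finset.erase_insert hjS, Finset.erase_insert hjT] using this
    have hrest : ∑ S ∈ (I.erase j).powersetCard ((k - 1).toNat + 1),
          (∏ i ∈ S, p i) * (∏ i ∈ I \ S, (1 - p i))
        = (1 - p j) * ∑ S ∈ (I.erase j).powersetCard ((k - 1).toNat + 1),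
            (∏ i ∈ S, p i) * (∏ i ∈ I.erase j \ S, (1 - p i)) := by
      rw [Finset.mul_sum]
      apply Finset.sum_congr rfl
      intro S hS
      have hSsub : S ⊆ I.erase j := (Finset.mem_powersetCard.1 hS).1
      have hjIS : j ∈ I \ S := Finset.mem_sdiff.2 ⟨hj, fun h => (Finset.mem_erase.1 (hSsub h)).1 rfl⟩
      have hsd : (I \ S).erase j = I.erase j \ S := by
        ext i; simp [Finset.mem_erase]; tauto
      rw [← Finset.mul_prod_erase (I \ S) _ hjIS, hsd]; ring
    rw [himg, hrest]; ring

lemma bernoulliSumPMF_count (I : Finset ℕ) (p : ℕ → ℝ) (k : ℤ) :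
    ∑ j ∈ I, p j * bernoulliSumPMF (I.erase j) p (k - 1)
      = (k : ℝ) * bernoulliSumPMF I p k := by
  unfold bernoulliSumPMF
  rcases le_or_gt k 0 with hk | hk
  · rw [Finset.sum_eq_zero (fun j _ => by rw [if_neg (by omega)]; ring)]
    rcases eq_or_lt_of_le hk with h | h
    · subst h; simp
    · rw [if_neg (by omega)]; ring
  · have h0 : (0:ℤ) ≤ k - 1 := by omega
    have h0' : (0:ℤ) ≤ k := by omega
    rw [if_pos h0']
    have hL : ∀ j ∈ I, p j * (if 0 ≤ k - 1 then
          ∑ S ∈ (I.erase j).powersetCard (k-1).toNat,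
            (∏ i ∈ S, p i) * (∏ i ∈ I.erase j \ S, (1 - p i)) else 0)
        = ∑ S ∈ (I.erase j).powersetCard (k-1).toNat,
            p j * ((∏ i ∈ S, p i) * (∏ i ∈ I.erase j \ S, (1 - p i))) := by
      intro j _; rw [if_pos h0, Finset.mul_sum]
    rw [Finset.sum_congr rfl hL]
    rw [Finset.sum_sigma' I (fun j => (I.erase j).powersetCard (k-1).toNat)
      (fun j S => p j * ((∏ i ∈ S, p i) * (∏ i ∈ I.erase j \ S, (1 - p i))))]
    have key : ∑ x ∈ I.sigma (fun j => (I.erase j).powersetCard (k-1).toNat),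
          p x.1 * ((∏ i ∈ x.2, p i) * (∏ i ∈ I.erase x.1 \ x.2, (1 - p i)))
        = ∑ x ∈ (I.powersetCard k.toNat).sigma (fun T => T),
            (∏ i ∈ x.1, p i) * (∏ i ∈ I \ x.1, (1 - p i)) := by
      apply Finset.sum_nbij' (fun x => ⟨insert x.1 x.2, x.1⟩) (fun x => ⟨x.2, x.1.erase x.2⟩)
      · rintro ⟨j, S⟩ hx
        rw [Finset.mem_sigma] at hx ⊢
        obtain ⟨hjI, hS⟩ := hx
        rw [Finset.mem_powersetCard] at hS
        have hjS : j ∉ S := fun h => (Finset.mem_erase.1 (hS.1 h)).1 rfl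
        constructor
        · rw [Finset.mem_powersetCard]
          constructor
          · exact Finset.insert_subset hjI (hS.1.trans (Finset.erase_subset j I))
          · rw [Finset.card_insert_of_notMem hjS, hS.2]; omega
        · exact Finset.mem_insert_self j S
      · rintro ⟨T, j⟩ hx
        rw [Finset.mem_sigma] at hx ⊢
        obtain ⟨hT, hjT⟩ := hx
        rw [Finset.mem_powersetCard] at hT
        constructor
        · exact hT.1 hjT
        · rw [Finset.mem_powersetCard]
          constructor
          · intro i hi
            rw [Finset.mem_erase] at hi ⊢
            exact ⟨hi.1, hT.1 hi.2⟩
          · rw [Finset.card_erase_of_mem hjT, hT.2]; omega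
      · rintro ⟨j, S⟩ hx
        rw [Finset.mem_sigma] at hx
        have hjS : j ∉ S := fun h =>
          (Finset.mem_erase.1 ((Finset.mem_powersetCard.1 hx.2).1 h)).1 rfl
        simp [Finset.erase_insert hjS]
      · rintro ⟨T, j⟩ hx
        rw [Finset.mem_sigma] at hx
        simp [Finset.insert_erase hx.2]
      · rintro ⟨j, S⟩ hx
        rw [Finset.mem_sigma] at hx
        obtain ⟨hjI, hS⟩ := hx
        have hjS : j ∉ S := fun h =>
          (Finset.mem_erase.1 ((Finset.mem_powersetCard.1 hS).1 h)).1 rfl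
        have hsd : I \ insert j S = I.erase j \ S := by
          ext i; simp [Finset.mem_erase, Finset.mem_insert]; tauto
        simp only
        rw [Finset.prod_insert hjS, hsd]; ring
    rw [key, Finset.sum_sigma]
    rw [Finset.mul_sum]
    apply Finset.sum_congr rfl
    intro T hT
    show ∑ _s ∈ T, ((∏ i ∈ T, p i) * ∏ i ∈ I \ T, (1 - p i))
        = (k : ℝ) * ((∏ i ∈ T, p i) * ∏ i ∈ I \ T, (1 - p i))
    rw [Finset.sum_const, (Finset.mem_powersetCard.1 hT).2, nsmul_eq_mul]
    congr 1
    exact_mod_cast Int.toNat_of_nonneg h0'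

theorem bernoulli_sum_identity (m : ℕ) (p : ℕ → ℝ)
    (hp : ∀ i ∈ Finset.range m, 0 ≤ p i ∧ p i ≤ 1)
    (f : ℤ → ℝ) (hf : ∀ k, f k = bernoulliSumPMF (Finset.range m) p k)
    (f' : ℕ → ℤ → ℝ)
    (hf' : ∀ j ∈ Finset.range m, ∀ k, f' j k = bernoulliSumPMF (Finset.range m \ {j}) p k)
    (k q : ℤ) (hq : 1 ≤ q) :
    (q : ℝ) * f k * f (k - q) =
      ∑ j ∈ Finset.range m,
        p j * (1 - p j) * (f' j (k - 1) * f' j (k - q) - f' j k * f' j (k - q - 1)) := by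
  have hrec : ∀ j ∈ Finset.range m, ∀ t : ℤ,
      f t = p j * f' j (t - 1) + (1 - p j) * f' j t := by
    intro j hj t
    rw [hf, hf' j hj, hf' j hj, ← Finset.erase_eq]
    exact bernoulliSumPMF_rec _ p hj t
  have hcnt : ∀ t : ℤ, ∑ j ∈ Finset.range m, p j * f' j (t - 1) = (t : ℝ) * f t := by
    intro t
    rw [hf, Finset.sum_congr rfl (fun j hj => by rw [hf' j hj, ← Finset.erase_eq])]
    exact bernoulliSumPMF_count _ p t
  have step : ∀ j ∈ Finset.range m,
      p j * (1 - p j) * (f' j (k - 1) * f' j (k - q) - f' j k * f' j (k - q - 1))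
        = p j * f' j (k - 1) * f (k - q) - p j * f' j (k - q - 1) * f k := by
    intro j hj
    have h1 := hrec j hj k
    have h2 := hrec j hj (k - q)
    have e : k - q - 1 = k - q - 1 := rfl
    rw [h1, h2]
    ring
  rw [Finset.sum_congr rfl step, Finset.sum_sub_distrib, ← Finset.sum_mul, ← Finset.sum_mul,
    hcnt k, hcnt (k - q)]
  push_cast
  ring
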